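/- Let N be a quantum channel on d×d complex matrices, γ a positive-definite density matrix with N(γ) positive definite, and R_γ the Petz recovery map. Fix orthonormal eigenbases γ = ∑_i r_i |i⟩⟨i| and N(γ) = ∑_{k'} r'_{k'} |k'⟩⟨k'| with all r_i, r'_{k'} > 0, and define T_{ij→k'l'} = ⟨k'| N(|i⟩⟨j|) |l'⟩ and T̃_{ij←k'l'} = ⟨i| R_γ(|k'⟩⟨l'|) |j⟩. Then for all indices i, j, k', l': conj(T̃_{ij←k'l'}) = (r_i r_j / (r'_{k'} r'_{l'}))^{1/2} · T_{ij→k'l'}. Equivalently, whenever T̃_{ij←k'l'} ≠ 0, the quantum information exchange −log[T_{ij→k'l'} / conj(T̃_{ij←k'l'})] equals (1/2)log(r_i r_j) − (1/2)log(r'_{k'} r'_{l'}). -/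

import Mathlib

open Matrix
open scoped ComplexOrder

/-- ⟨v|A|w⟩ -/
noncomputable def braket {d : ℕ} (v : Fin d → ℂ) (A : Matrix (Fin d) (Fin d) ℂ)
    (w : Fin d → ℂ) : ℂ :=
  dotProduct (star v) (A.mulVec w)

/-- |v⟩⟨w| -/
noncomputable def ketbra {d : ℕ} (v w : Fin d → ℂ) : Matrix (Fin d) (Fin d) ℂ :=
  Matrix.vecMulVec v (star w)

/-- A quantum channel in Kraus form: N(X) = ∑ m, K m * X * (K m)ᴴ. -/
noncomputable def krausMap {d : ℕ} {ι : Type} [Fintype ι] (K : ι → Matrix (Fin d) (Fin d) ℂ)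
    (X : Matrix (Fin d) (Fin d) ℂ) : Matrix (Fin d) (Fin d) ℂ :=
  ∑ m, K m * X * (K m)ᴴ

/-- The adjoint map: N†(X) = ∑ m, (K m)ᴴ * X * K m. -/
noncomputable def krausAdj {d : ℕ} {ι : Type} [Fintype ι] (K : ι → Matrix (Fin d) (Fin d) ℂ)
    (X : Matrix (Fin d) (Fin d) ℂ) : Matrix (Fin d) (Fin d) ℂ :=
  ∑ m, (K m)ᴴ * X * K m

/-- An orthonormal family of vectors in ℂ^d. -/
def IsONB {d : ℕ} (e : Fin d → Fin d → ℂ) : Prop :=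
  ∀ i j, dotProduct (star (e i)) (e j) = if i = j then 1 else 0

/-- For A = ∑ i, r i • |e i⟩⟨e i| with `e` orthonormal and `r` positive, the complex
matrix power A^z = exp (z log A) is given by A^z = ∑ i, (r i)^z • |e i⟩⟨e i|. -/
noncomputable def projPow {d : ℕ} (r : Fin d → ℝ) (e : Fin d → Fin d → ℂ) (z : ℂ) :
    Matrix (Fin d) (Fin d) ℂ :=
  ∑ i, ((r i : ℂ) ^ z) • ketbra (e i) (e i)

/-- The Petz recovery map, expressed through the eigendecompositions
γ = ∑ r_i |i⟩⟨i| and N(γ) = ∑ r'_k |k'⟩⟨k'|: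
R_γ(X) = γ^{1/2} N†(N(γ)^{-1/2} X N(γ)^{-1/2}) γ^{1/2}. -/
noncomputable def petzB {d : ℕ} {ι : Type} [Fintype ι] (K : ι → Matrix (Fin d) (Fin d) ℂ)
    (r : Fin d → ℝ) (e : Fin d → Fin d → ℂ) (r' : Fin d → ℝ) (f : Fin d → Fin d → ℂ)
    (X : Matrix (Fin d) (Fin d) ℂ) : Matrix (Fin d) (Fin d) ℂ :=
  projPow r e (1/2) * krausAdj K (projPow r' f (-(1/2)) * X * projPow r' f (-(1/2))) *
    projPow r e (1/2)

-- helpers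
lemma sum_mulVec' {d : ℕ} {ι : Type} [Fintype ι] (A : ι → Matrix (Fin d) (Fin d) ℂ)
    (x : Fin d → ℂ) : (∑ m, A m).mulVec x = ∑ m, (A m).mulVec x := by
  ext i
  simp [Matrix.mulVec, dotProduct, Finset.sum_apply, Finset.sum_mul, Matrix.sum_apply]
  rw [Finset.sum_comm]

lemma dotProduct_sum' {d : ℕ} {ι : Type} [Fintype ι] (v : Fin d → ℂ) (w : ι → Fin d → ℂ) :
    v ⬝ᵥ (∑ m, w m) = ∑ m, v ⬝ᵥ w m := by
  simp [dotProduct, Finset.sum_apply, Finset.mul_sum]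
  rw [Finset.sum_comm]

lemma vmv_mulVec {d : ℕ} (a b x : Fin d → ℂ) :
    (vecMulVec a b).mulVec x = (b ⬝ᵥ x) • a := by
  ext i
  simp [mulVec, dotProduct, vecMulVec_apply, Finset.mul_sum, mul_assoc, mul_comm, mul_left_comm]

lemma ketbra_mulVec {d : ℕ} (v w x : Fin d → ℂ) :
    (ketbra v w).mulVec x = (star w ⬝ᵥ x) • v := by
  simp [ketbra, vmv_mulVec]

lemma projPow_mulVec {d : ℕ} (r : Fin d → ℝ) (e : Fin d → Fin d → ℂ) (he : IsONB e)
    (z : ℂ) (j : Fin d) : (projPow r e z).mulVec (e j) = ((r j : ℂ) ^ z) • e j := by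
  rw [projPow, sum_mulVec']
  rw [Finset.sum_eq_single j]
  · simp [smul_mulVec, ketbra_mulVec, he j j]
  · intro m _ hm
    simp [smul_mulVec, ketbra_mulVec, he m j, hm]
  · simp

lemma dot_projPow_mulVec {d : ℕ} (r : Fin d → ℝ) (e : Fin d → Fin d → ℂ) (he : IsONB e)
    (z : ℂ) (i : Fin d) (x : Fin d → ℂ) :
    star (e i) ⬝ᵥ (projPow r e z).mulVec x = ((r i : ℂ) ^ z) * (star (e i) ⬝ᵥ x) := by
  rw [projPow, sum_mulVec']
  rw [dotProduct_sum']
  rw [Finset.sum_eq_single i]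
  · simp [smul_mulVec, ketbra_mulVec, he i i, smul_eq_mul]
  · intro m _ hm
    simp [smul_mulVec, ketbra_mulVec, he i m, Ne.symm hm]
  · simp

lemma dot_ct {d : ℕ} (A : Matrix (Fin d) (Fin d) ℂ) (v w : Fin d → ℂ) :
    star v ⬝ᵥ Aᴴ.mulVec w = (starRingEnd ℂ) (star w ⬝ᵥ A.mulVec v) := by
  simp only [mulVec, dotProduct, conjTranspose_apply, map_sum, RingHom.map_mul, Pi.star_apply,
    RCLike.star_def, Complex.conj_conj, Finset.mul_sum, Finset.sum_mul]
  rw [Finset.sum_comm]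
  refine Finset.sum_congr rfl fun a _ => Finset.sum_congr rfl fun b _ => by ring

lemma hT {d : ℕ} {ι : Type} [Fintype ι] (K : ι → Matrix (Fin d) (Fin d) ℂ)
    (e f : Fin d → Fin d → ℂ) (i j k l : Fin d) :
    braket (f k) (krausMap K (ketbra (e i) (e j))) (f l) =
      ∑ m, (star (f k) ⬝ᵥ (K m).mulVec (e i)) *
        (starRingEnd ℂ) (star (f l) ⬝ᵥ (K m).mulVec (e j)) := by
  simp only [braket, krausMap, ← mulVec_mulVec, sum_mulVec', dotProduct_sum', ketbra_mulVec,
    mulVec_smul, dotProduct_smul, smul_eq_mul, dot_ct]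
  exact Finset.sum_congr rfl fun m _ => by ring

lemma hTt {d : ℕ} {ι : Type} [Fintype ι] (K : ι → Matrix (Fin d) (Fin d) ℂ)
    (r : Fin d → ℝ) (e : Fin d → Fin d → ℂ) (hr : ∀ i, 0 < r i) (he : IsONB e)
    (r' : Fin d → ℝ) (f : Fin d → Fin d → ℂ) (hr' : ∀ k, 0 < r' k) (hf : IsONB f)
    (i j k l : Fin d) :
    braket (e i) (petzB K r e r' f (ketbra (f k) (f l))) (e j) =
      ((Real.sqrt (r i) * Real.sqrt (r j) * (Real.sqrt (r' k))⁻¹ * (Real.sqrt (r' l))⁻¹ : ℝ) : ℂ) *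
      ∑ m, (starRingEnd ℂ) (star (f k) ⬝ᵥ (K m).mulVec (e i)) *
        (star (f l) ⬝ᵥ (K m).mulVec (e j)) := by
  have hh : ∀ s : ℝ, 0 < s → (s : ℂ) ^ ((1:ℂ)/2) = (Real.sqrt s : ℂ) := by
    intro s hs
    rw [show ((1:ℂ)/2) = ((1/2 : ℝ) : ℂ) by norm_num, ← Complex.ofReal_cpow hs.le,
      ← Real.sqrt_eq_rpow]
  have hhn : ∀ s : ℝ, 0 < s → (s : ℂ) ^ (-((1:ℂ)/2)) = ((Real.sqrt s)⁻¹ : ℝ) := by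
    intro s hs
    rw [Complex.cpow_neg, hh s hs, ← Complex.ofReal_inv]
  simp only [braket, petzB, krausAdj, ← mulVec_mulVec, sum_mulVec', dotProduct_sum',
    ketbra_mulVec, mulVec_smul, projPow_mulVec r e he, projPow_mulVec r' f hf,
    dot_projPow_mulVec r e he, dot_projPow_mulVec r' f hf, dotProduct_smul, smul_eq_mul,
    dot_ct, smul_smul]
  simp only [hh _ (hr i), hh _ (hr j), hhn _ (hr' k), hhn _ (hr' l), Finset.mul_sum]
  push_cast
  refine Finset.sum_congr rfl fun m _ => by ring

/-- for all matrix elements, conj(T̃_{ij←k'l'}) = √(r_i r_j/(r'_k r'_l)) T_{ij→k'l'};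
equivalently the quantum information exchange
−log[T_{ij→k'l'}/conj(T̃_{ij←k'l'})] equals ½log(r_i r_j) − ½log(r'_k r'_l). -/
theorem quantum_information_exchange
    {d : ℕ} {ι : Type} [Fintype ι] (K : ι → Matrix (Fin d) (Fin d) ℂ)
    (hK : ∑ m, (K m)ᴴ * K m = 1)
    (r : Fin d → ℝ) (e : Fin d → Fin d → ℂ) (hr : ∀ i, 0 < r i) (he : IsONB e)
    (hrtr : ∑ i, r i = 1)
    (r' : Fin d → ℝ) (f : Fin d → Fin d → ℂ) (hr' : ∀ k, 0 < r' k) (hf : IsONB f)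
    (hNγ : krausMap K (∑ i, ((r i : ℂ)) • ketbra (e i) (e i)) =
      ∑ k, ((r' k : ℂ)) • ketbra (f k) (f k)) :
    ∀ i j k l : Fin d,
      (starRingEnd ℂ) (braket (e i) (petzB K r e r' f (ketbra (f k) (f l))) (e j)) =
        (Real.sqrt (r i * r j / (r' k * r' l)) : ℂ) *
          braket (f k) (krausMap K (ketbra (e i) (e j))) (f l) ∧
      (braket (e i) (petzB K r e r' f (ketbra (f k) (f l))) (e j) ≠ 0 →
        -Complex.log
            (braket (f k) (krausMap K (ketbra (e i) (e j))) (f l) /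
              (starRingEnd ℂ) (braket (e i) (petzB K r e r' f (ketbra (f k) (f l))) (e j))) =
          ((1/2 * Real.log (r i * r j) - 1/2 * Real.log (r' k * r' l) : ℝ) : ℂ)) := by
  intro i j k l
  have hx : (0:ℝ) < r i * r j / (r' k * r' l) :=
    div_pos (mul_pos (hr i) (hr j)) (mul_pos (hr' k) (hr' l))
  have hc : Real.sqrt (r i * r j / (r' k * r' l)) =
      Real.sqrt (r i) * Real.sqrt (r j) * (Real.sqrt (r' k))⁻¹ * (Real.sqrt (r' l))⁻¹ := by
    rw [div_eq_mul_inv, Real.sqrt_mul (mul_pos (hr i) (hr j)).le,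
      Real.sqrt_mul (hr i).le, Real.sqrt_inv, Real.sqrt_mul (hr' k).le, mul_inv]
    ring
  have hcpos : 0 < Real.sqrt (r i * r j / (r' k * r' l)) := Real.sqrt_pos.mpr hx
  have h1 : (starRingEnd ℂ) (braket (e i) (petzB K r e r' f (ketbra (f k) (f l))) (e j)) =
      (Real.sqrt (r i * r j / (r' k * r' l)) : ℂ) *
        braket (f k) (krausMap K (ketbra (e i) (e j))) (f l) := by
    rw [hTt K r e hr he r' f hr' hf i j k l, hT K e f i j k l, hc]
    simp only [RingHom.map_mul, map_sum, Complex.conj_ofReal, Complex.conj_conj]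
    try exact congrArg _ (Finset.sum_congr rfl fun m _ => by ring)
  refine ⟨h1, fun hne => ?_⟩
  have hTne : braket (f k) (krausMap K (ketbra (e i) (e j))) (f l) ≠ 0 := by
    intro h0
    apply hne
    have := h1
    rw [h0, mul_zero] at this
    exact (starRingEnd ℂ).injective (by simpa using this)
  rw [h1, mul_comm, div_mul_cancel_left₀ hTne, ← Complex.ofReal_inv,
    ← Complex.ofReal_log (inv_nonneg.mpr (Real.sqrt_nonneg _)), ← Complex.ofReal_neg]
  norm_cast
  rw [Real.log_inv, neg_neg, Real.log_sqrt hx.le,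
    Real.log_div (mul_pos (hr i) (hr j)).ne' (mul_pos (hr' k) (hr' l)).ne']
  ring
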